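/- arXiv:1907.03844 — 4 statements merged into one kernel-verified Lean document; each statement's English description precedes it below -/
import Mathlib

section
/- For every integer n ≥ 3, the automorphism group of the dihedral group D_n is isomorphic to the semidirect product (ℤ/nℤ) ⋊ (ℤ/nℤ)ˣ in which the unit group acts by multiplication; explicitly, the map sending (i, j) ∈ (ℤ/nℤ) ⋊ (ℤ/nℤ)ˣ to the automorphism φ_{i,j} of D_n defined by φ_{i,j}(t^a x^b) = t^a x^{ia + jb} is a group isomorphism (so φ_{i₂,j₂} ∘ φ_{i₁,j₁} = φ_{i₂ + j₂ i₁, j₂ j₁}). -/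
/-- The action of `(ℤ/nℤ)ˣ` on `Multiplicative (ℤ/nℤ)` by multiplication. -/
def unitsMulAction (n : ℕ) : (ZMod n)ˣ →* MulAut (Multiplicative (ZMod n)) where
  toFun u := AddEquiv.toMultiplicative (DistribMulAction.toAddAut (ZMod n)ˣ (ZMod n) u)
  map_one' := by
    ext x
    simp [AddEquiv.toMultiplicative]
  map_mul' := by
    intro u v
    ext x
    simp [AddEquiv.toMultiplicative, mul_smul]

namespace AutDihedralAux

open DihedralGroup

/-- The endomorphism `φ_{i,j}` of `D_n`. -/
def dmap (n : ℕ) (i : ZMod n) (j : ZMod n) : DihedralGroup n →* DihedralGroup n where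
  toFun g := match g with
    | .r b => .r (j * b)
    | .sr b => .sr (i + j * b)
  map_one' := by
    show DihedralGroup.r _ = _
    rw [DihedralGroup.one_def]; ring_nf
  map_mul' := by
    rintro (a | a) (b | b) <;>
      simp only [r_mul_r, r_mul_sr, sr_mul_r, sr_mul_sr] <;> ring_nf

lemma dmap_comp (n : ℕ) (i₁ j₁ i₂ j₂ : ZMod n) :
    (dmap n i₂ j₂).comp (dmap n i₁ j₁) = dmap n (i₂ + j₂ * i₁) (j₂ * j₁) := by
  ext g
  rcases g with b | b <;> simp only [dmap, MonoidHom.comp_apply, MonoidHom.coe_mk,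
    OneHom.coe_mk] <;> ring_nf

lemma dmap_id (n : ℕ) : dmap n 0 1 = MonoidHom.id (DihedralGroup n) := by
  ext g
  rcases g with b | b <;> simp [dmap]

/-- `φ_{i,j}` as an automorphism, for `j` a unit. -/
def dAut (n : ℕ) (i : ZMod n) (j : (ZMod n)ˣ) : MulAut (DihedralGroup n) :=
  MonoidHom.toMulEquiv (dmap n i (j : ZMod n)) (dmap n (-((j⁻¹ : (ZMod n)ˣ) : ZMod n) * i)
    ((j⁻¹ : (ZMod n)ˣ) : ZMod n))
    (by rw [dmap_comp, ← dmap_id n]; congr 1 <;>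
          push_cast [← Units.val_mul, mul_neg] <;> simp [mul_comm, mul_assoc, ← mul_assoc])
    (by rw [dmap_comp, ← dmap_id n]; congr 1 <;>
          push_cast [← Units.val_mul] <;> simp [mul_comm, mul_assoc, ← mul_assoc])

@[simp] lemma dAut_r (n : ℕ) (i : ZMod n) (j : (ZMod n)ˣ) (b : ZMod n) :
    dAut n i j (DihedralGroup.r b) = DihedralGroup.r ((j : ZMod n) * b) := rfl

@[simp] lemma dAut_sr (n : ℕ) (i : ZMod n) (j : (ZMod n)ˣ) (b : ZMod n) :
    dAut n i j (DihedralGroup.sr b) = DihedralGroup.sr (i + (j : ZMod n) * b) := rfl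

/-- The homomorphism from the semidirect product into `Aut(D_n)`. -/
def F (n : ℕ) : Multiplicative (ZMod n) ⋊[unitsMulAction n] (ZMod n)ˣ →*
    MulAut (DihedralGroup n) where
  toFun p := dAut n (Multiplicative.toAdd p.left) p.right
  map_one' := by
    ext g
    rcases g with b | b <;> simp
  map_mul' := by
    intro p q
    ext g
    rcases g with b | b <;>
      simp only [MonoidHom.coe_mk, OneHom.coe_mk, SemidirectProduct.mul_left,
        SemidirectProduct.mul_right] <;>
      simp [unitsMulAction, dAut, dmap, AddEquiv.toMultiplicative,
        DistribMulAction.toAddAut_apply, DistribMulAction.toAddEquiv_apply,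
        MonoidHom.toMulEquiv, Units.smul_def] <;>
      ring_nf

lemma r_pow (n : ℕ) (a : ZMod n) (k : ℕ) :
    (DihedralGroup.r a : DihedralGroup n) ^ k = DihedralGroup.r ((k : ZMod n) * a) := by
  induction k with
  | zero => simp
  | succ k ih => rw [pow_succ, ih, r_mul_r]; push_cast; ring_nf

end AutDihedralAux

open AutDihedralAux DihedralGroup in
/-- `Aut(D_n) ≅ (ℤ/nℤ) ⋊ (ℤ/nℤ)ˣ`, via `(i, j) ↦ φ_{i,j}` where
`φ_{i,j}(t^a x^b) = t^a x^{ia + jb}`; here `x^b = r b` and `t x^b = sr b`. -/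
theorem autDihedralGroup_iso_semidirect (n : ℕ) (hn : 3 ≤ n) :
    ∃ e : Multiplicative (ZMod n) ⋊[unitsMulAction n] (ZMod n)ˣ ≃* MulAut (DihedralGroup n),
      ∀ (i : ZMod n) (j : (ZMod n)ˣ) (b : ZMod n),
        e ⟨Multiplicative.ofAdd i, j⟩ (DihedralGroup.r b) =
            DihedralGroup.r ((j : ZMod n) * b) ∧
        e ⟨Multiplicative.ofAdd i, j⟩ (DihedralGroup.sr b) =
            DihedralGroup.sr (i + (j : ZMod n) * b) := by
  have hn0 : n ≠ 0 := by omega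
  haveI : NeZero n := ⟨hn0⟩
  have hbij : Function.Bijective (F n) := by
    constructor
    · intro p q hpq
      have h1 := DFunLike.congr_fun hpq (DihedralGroup.r 1)
      have h2 := DFunLike.congr_fun hpq (DihedralGroup.sr 0)
      simp only [F, MonoidHom.coe_mk, OneHom.coe_mk,
        dAut_r, dAut_sr, mul_one, mul_zero, add_zero] at h1 h2
      have hj : p.right = q.right := Units.ext (DihedralGroup.r.inj h1)
      have hi : p.left = q.left := by
        have := DihedralGroup.sr.inj h2
        exact Multiplicative.toAdd.injective this
      exact SemidirectProduct.ext hi hj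
    · intro f
      -- f (r 1) = r c with c a unit
      have hord : orderOf (f (DihedralGroup.r 1)) = n := by
        rw [show f (DihedralGroup.r 1) = f.toMonoidHom (DihedralGroup.r 1) from rfl,
          orderOf_injective f.toMonoidHom f.injective, orderOf_r_one]
      obtain ⟨c, hc⟩ : ∃ c, f (DihedralGroup.r 1) = DihedralGroup.r c := by
        rcases h : f (DihedralGroup.r 1) with b | b
        · exact ⟨b, rfl⟩
        · exfalso; rw [h, orderOf_sr] at hord; omega
      have hcu : IsUnit c := by
        rw [hc, orderOf_r] at hord
        have hg : Nat.gcd n c.val = 1 := (Nat.div_eq_self.mp hord).resolve_left hn0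
        rw [← ZMod.natCast_zmod_val c, ZMod.isUnit_iff_coprime]
        exact Nat.coprime_comm.mp hg
      obtain ⟨cu, hcuv⟩ := hcu
      -- f (r b) = r (c * b)
      have hfr : ∀ b : ZMod n, f (DihedralGroup.r b) = DihedralGroup.r (c * b) := by
        intro b
        have : (DihedralGroup.r b : DihedralGroup n) = (DihedralGroup.r 1) ^ b.val := by
          rw [r_one_pow, ZMod.natCast_zmod_val]
        rw [this, map_pow, hc, AutDihedralAux.r_pow, ZMod.natCast_zmod_val, mul_comm]
      -- f (sr 0) = sr d
      obtain ⟨d, hd⟩ : ∃ d, f (DihedralGroup.sr 0) = DihedralGroup.sr d := by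
        rcases h : f (DihedralGroup.sr 0) with b | b
        · exfalso
          have : f (DihedralGroup.r ((cu⁻¹ : (ZMod n)ˣ) * b)) = DihedralGroup.r b := by
            rw [hfr, ← hcuv, ← mul_assoc, ← Units.val_mul, mul_inv_cancel, Units.val_one, one_mul]
          have heq := f.injective (this.trans h.symm)
          cases heq
        · exact ⟨b, rfl⟩
      refine ⟨⟨Multiplicative.ofAdd d, cu⟩, ?_⟩
      ext g
      rcases g with b | b
      · simp only [F, MonoidHom.coe_mk, OneHom.coe_mk, dAut_r, hcuv]
        exact (hfr b).symm
      · have : (DihedralGroup.sr b : DihedralGroup n) = DihedralGroup.sr 0 * DihedralGroup.r b := by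
          rw [sr_mul_r, zero_add]
        simp only [F, MonoidHom.coe_mk, OneHom.coe_mk, dAut_sr, toAdd_ofAdd, hcuv]
        rw [this, map_mul, hd, hfr, sr_mul_r]
  refine ⟨MulEquiv.ofBijective (F n) hbij, ?_⟩
  intro i j b
  constructor <;> simp [MulEquiv.ofBijective, F]
end

section
/- Let Z be a finite set of cardinality 2n with n ≥ 1 and let {X, Y} be a splitting of Z (so Y = Z \ X and |X| = |Y| = n). Then the subgroup W(X,Y) of Perm(Z) is self-normalizing: Norm_{Perm(Z)}(W(X,Y)) = W(X,Y). -/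
/-- A subgroup of `Equiv.Perm Z` is regular if it acts transitively and
no non-identity element has a fixed point. -/
def IsRegularSubgroup {Z : Type*} (N : Subgroup (Equiv.Perm Z)) : Prop :=
  (∀ z w : Z, ∃ σ ∈ N, σ z = w) ∧ ∀ σ ∈ N, σ ≠ 1 → ∀ z : Z, σ z ≠ z

/-- The wreath-product subgroup `W(X, Y)` (with `Y = Xᶜ`): all permutations that
either fix both `X` and `Y` setwise, or interchange them. -/
def wprod {Z : Type*} (X : Set Z) : Subgroup (Equiv.Perm Z) where
  carrier := {w | (w '' X = X ∧ w '' Xᶜ = Xᶜ) ∨ (w '' X = Xᶜ ∧ w '' Xᶜ = X)}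
  one_mem' := by simp
  mul_mem' := by
    rintro a b (⟨ha1, ha2⟩ | ⟨ha1, ha2⟩) (⟨hb1, hb2⟩ | ⟨hb1, hb2⟩) <;>
      simp only [Set.mem_setOf_eq, Equiv.Perm.coe_mul, Set.image_comp, hb1, hb2, ha1, ha2] <;>
      tauto
  inv_mem' := by
    intro a h
    have key : ∀ S T : Set Z, a '' S = T → (a⁻¹ : Equiv.Perm Z) '' T = S := by
      intro S T hST
      rw [← hST, Set.image_image]
      simp [Equiv.Perm.inv_def]
    rcases h with ⟨h1, h2⟩ | ⟨h1, h2⟩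
    · exact Or.inl ⟨key _ _ h1, key _ _ h2⟩
    · exact Or.inr ⟨key _ _ h2, key _ _ h1⟩

/-- The image of the left regular representation `λ : G → Perm G`. -/
def leftRegRange (G : Type*) [Group G] : Subgroup (Equiv.Perm G) :=
  (MulAction.toPermHom G G).range

/-- `|Υ_n|`: number of units of exponent 2 mod `n`. -/
noncomputable def upsilonCard (n : ℕ) : ℕ :=
  Nat.card {u : (ZMod n)ˣ // u ^ 2 = 1}

open Classical in
theorem swap_image_eq {Z : Type*} (a b : Z) (S : Set Z) (h : a ∈ S ↔ b ∈ S) :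
    Equiv.swap a b '' S = S := by
  classical
  ext z
  rw [show (Equiv.swap a b '' S) = (Equiv.swap a b).symm ⁻¹' S from
    (Equiv.image_eq_preimage_symm _ _), Set.mem_preimage, Equiv.symm_swap]
  rcases eq_or_ne z a with rfl | hza
  · simp [Equiv.swap_apply_left, h]
  rcases eq_or_ne z b with rfl | hzb
  · simp [Equiv.swap_apply_right, h]
  · rw [Equiv.swap_apply_of_ne_of_ne hza hzb]

theorem mem_wprod_iff {Z : Type*} (X : Set Z) (w : Equiv.Perm Z) :
    w ∈ wprod X ↔ (w '' X = X ∨ w '' X = Xᶜ) := by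
  constructor
  · rintro (⟨h1, _⟩ | ⟨h1, _⟩)
    · exact Or.inl h1
    · exact Or.inr h1
  · rintro (h | h)
    · exact Or.inl ⟨h, by rw [Set.image_compl_eq w.bijective, h]⟩
    · exact Or.inr ⟨h, by rw [Set.image_compl_eq w.bijective, h, compl_compl]⟩

/-- For a splitting `{X, Y}` of a set of size `2n`, `W(X,Y)` is self-normalizing. -/
theorem wprod_self_normalizing {Z : Type*} [Fintype Z] (n : ℕ) (hn : 1 ≤ n)
    (hZ : Fintype.card Z = 2 * n) (X : Set Z) (hX : X.ncard = n) (hXc : Xᶜ.ncard = n) :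
    Subgroup.normalizer (wprod X : Set (Equiv.Perm Z)) = wprod X := by
  classical
  refine le_antisymm ?_ (Subgroup.le_normalizer)
  intro g hg
  rw [Subgroup.mem_normalizer_iff] at hg
  rcases eq_or_lt_of_le hn with h1 | h2
  · -- n = 1
    obtain ⟨a, ha⟩ := Set.ncard_eq_one.mp (hX.trans h1.symm)
    obtain ⟨b, hb⟩ := Set.ncard_eq_one.mp (hXc.trans h1.symm)
    rw [mem_wprod_iff]
    have hga : g a ∈ X ∨ g a ∈ Xᶜ := by
      rcases Classical.em (g a ∈ X) with h | h
      · exact Or.inl h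
      · exact Or.inr h
    rcases hga with h | h
    · left
      rw [ha] at h ⊢
      rw [Set.image_singleton, h]
    · right
      rw [hb] at h
      rw [ha, Set.image_singleton, Set.mem_singleton_iff.mp h, ← ha, hb]
  · -- n ≥ 2
    by_contra hgW
    rw [mem_wprod_iff] at hgW
    push_neg at hgW
    obtain ⟨hne1, hne2⟩ := hgW
    have himg : (g '' X).ncard = n := by
      rw [Set.ncard_image_of_injective _ g.injective, hX]
    have hXfin : X.Finite := Set.toFinite X
    have hXcfin : (Xᶜ : Set Z).Finite := Set.toFinite _
    -- find x1 ∈ X with g x1 ∈ X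
    have h1 : ∃ x ∈ X, g x ∈ X := by
      by_contra hc
      push_neg at hc
      have hsub : g '' X ⊆ Xᶜ := by
        rintro _ ⟨x, hx, rfl⟩
        exact hc x hx
      exact hne2 (Set.eq_of_subset_of_ncard_le hsub (by rw [himg, hXc]) hXcfin)
    have h2 : ∃ x ∈ X, g x ∈ Xᶜ := by
      by_contra hc
      push_neg at hc
      have hsub : g '' X ⊆ X := by
        rintro _ ⟨x, hx, rfl⟩
        simpa using hc x hx
      exact hne1 (Set.eq_of_subset_of_ncard_le hsub (by rw [himg, hX]) hXfin)
    obtain ⟨x1, hx1, hgx1⟩ := h1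
    obtain ⟨x2, hx2, hgx2⟩ := h2
    have hx12 : x1 ≠ x2 := by
      rintro rfl
      exact hgx2 hgx1
    have hσ : Equiv.swap x1 x2 ∈ wprod X := by
      rw [mem_wprod_iff]
      left
      exact swap_image_eq x1 x2 X (iff_of_true hx1 hx2)
    have hτ : g * Equiv.swap x1 x2 * g⁻¹ ∈ wprod X := (hg _).mp hσ
    rw [← Equiv.swap_apply_apply, mem_wprod_iff] at hτ
    set a := g x1 with ha
    set b := g x2 with hb
    have hab : a ≠ b := fun h => hgx2 (h ▸ hgx1)
    -- a ∉ swap a b '' X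
    have hanot : a ∉ Equiv.swap a b '' X := by
      rintro ⟨z, hz, hza⟩
      rcases eq_or_ne z a with rfl | h
      · rw [Equiv.swap_apply_left] at hza
        exact hab hza.symm
      rcases eq_or_ne z b with rfl | h'
      · exact hgx2 hz
      · rw [Equiv.swap_apply_of_ne_of_ne h h'] at hza
        exact h hza
    -- ∃ c ∈ X, c ≠ a; then c ∈ swap a b '' X
    obtain ⟨c, hc, hca⟩ := Set.exists_ne_of_one_lt_ncard (by omega : 1 < X.ncard) a
    have hcb : c ≠ b := fun h => hgx2 (h ▸ hc)
    have hcmem : c ∈ Equiv.swap a b '' X :=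
      ⟨c, hc, Equiv.swap_apply_of_ne_of_ne hca hcb⟩
    rcases hτ with h | h
    · rw [h] at hanot
      exact hanot hgx1
    · rw [h] at hcmem
      exact hcmem hc
end

section
/- For n ≥ 3, consider the left regular representation λ(D_n) ≤ B = Perm(D_n). The number of subsets X of (the underlying set of) D_n with 1 ∈ X, |X| = n, and λ(D_n) ≤ W(X, X^c) equals 1 if n is odd, and equals 3 if n is even. (Equivalently, λ(D_n) is contained in the wreath-product subgroup W(X,Y) for exactly one splitting {X,Y} when n is odd, and for exactly three splittings when n is even.) -/
namespace CountSplittings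

open DihedralGroup Multiplicative

abbrev Z2 := Multiplicative (ZMod 2)

lemma z2_ne_one : ∀ x : Z2, x ≠ 1 → x = ofAdd 1 := by decide

lemma z2_cases : ∀ x : Z2, x = 1 ∨ x = ofAdd 1 := by decide

variable {n : ℕ}

/-! ### Homs `D_n →* Z2` vs pairs -/

lemma hom_r_apply [NeZero n] (f : DihedralGroup n →* Z2) (i : ZMod n) :
    f (.r i) = f (.r 1) ^ i.val := by
  rw [← map_pow, r_one_pow, ZMod.natCast_rightInverse i]

lemma hom_sr_apply (f : DihedralGroup n →* Z2) (i : ZMod n) :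
    f (.sr i) = f (.sr 0) * f (.r i) := by
  rw [← map_mul, sr_mul_r, zero_add]

lemma hom_ext [NeZero n] {f g : DihedralGroup n →* Z2}
    (h1 : f (.r 1) = g (.r 1)) (h0 : f (.sr 0) = g (.sr 0)) : f = g := by
  ext d
  cases d with
  | r i => rw [hom_r_apply f i, hom_r_apply g i, h1]
  | sr i => rw [hom_sr_apply f i, hom_sr_apply g i, hom_r_apply f i, hom_r_apply g i, h1, h0]

/-- the pair associated to a hom. -/
def pairOf (f : DihedralGroup n →* Z2) : ZMod 2 × ZMod 2 :=
  (toAdd (f (.r 1)), toAdd (f (.sr 0)))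

lemma pairOf_smul [NeZero n] (f : DihedralGroup n →* Z2) : n • (pairOf f).1 = 0 := by
  have h : f (.r 1) ^ n = 1 := by
    rw [← map_pow, r_one_pow, ZMod.natCast_self, ← one_def, map_one]
  have := congrArg toAdd h
  simpa [pairOf] using this

lemma pairOf_inj [NeZero n] {f g : DihedralGroup n →* Z2} (h : pairOf f = pairOf g) :
    f = g := by
  have h1 := congrArg Prod.fst h
  have h2 := congrArg Prod.snd h
  exact hom_ext (toAdd.injective h1) (toAdd.injective h2)

/-- the underlying function of the hom associated to a pair. -/
def preHom (φ : ZMod n →+ ZMod 2) (b : ZMod 2) : DihedralGroup n → Z2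
  | .r i => ofAdd (φ i)
  | .sr i => ofAdd (b + φ i)

/-- the hom with `r i ↦ φ i`, `sr i ↦ b + φ i`. -/
def pairHom (φ : ZMod n →+ ZMod 2) (b : ZMod 2) : DihedralGroup n →* Z2 where
  toFun := preHom φ b
  map_one' := by
    show preHom φ b (DihedralGroup.r 0) = 1
    simp [preHom]
  map_mul' := by
    rintro (i | i) (j | j) <;>
      simp only [preHom, r_mul_r, r_mul_sr, sr_mul_r, sr_mul_sr, map_add, map_sub,
        ← ofAdd_add] <;>
      · congr 1
        generalize φ i = x
        generalize φ j = y
        generalize b = c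
        revert x y c
        decide

@[simp] lemma pairHom_r (φ : ZMod n →+ ZMod 2) (b : ZMod 2) (i : ZMod n) :
    pairHom φ b (.r i) = ofAdd (φ i) := rfl

@[simp] lemma pairHom_sr (φ : ZMod n →+ ZMod 2) (b : ZMod 2) (i : ZMod n) :
    pairHom φ b (.sr i) = ofAdd (b + φ i) := rfl

/-- the hom associated to a pair with `n • a = 0`. -/
def mkHom (p : ZMod 2 × ZMod 2) (hp : n • p.1 = 0) : DihedralGroup n →* Z2 :=
  pairHom (ZMod.lift n ⟨zmultiplesHom (ZMod 2) p.1, by simpa using hp⟩) p.2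

lemma pairOf_mkHom (p : ZMod 2 × ZMod 2) (hp : n • p.1 = 0) : pairOf (mkHom p hp) = p := by
  have h1 : mkHom p hp (.r 1) = ofAdd p.1 := by
    rw [mkHom, pairHom_r]
    congr 1
    have h : ((1 : ℤ) : ZMod n) = (1 : ZMod n) := by push_cast; rfl
    rw [← h, ZMod.lift_coe]
    simp
  have h2 : mkHom p hp (.sr 0) = ofAdd p.2 := by
    rw [mkHom, pairHom_sr]
    simp
  unfold pairOf
  rw [h1, h2]
  rfl

lemma surj_iff [NeZero n] (f : DihedralGroup n →* Z2) :
    Function.Surjective f ↔ pairOf f ≠ 0 := by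
  constructor
  · intro hs h0
    have h1 : f (.r 1) = 1 := toAdd.injective (congrArg Prod.fst h0)
    have h2 : f (.sr 0) = 1 := toAdd.injective (congrArg Prod.snd h0)
    obtain ⟨d, hd⟩ := hs (ofAdd 1)
    have hd1 : f d = 1 := by
      cases d with
      | r i => rw [hom_r_apply f i, h1, one_pow]
      | sr i => rw [hom_sr_apply f i, hom_r_apply f i, h1, h2, one_pow, one_mul]
    rw [hd1] at hd
    exact absurd hd.symm (by decide)
  · intro hp y
    rcases z2_cases y with rfl | rfl
    · exact ⟨1, map_one f⟩
    · rcases z2_cases (f (.r 1)) with h | h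
      · rcases z2_cases (f (.sr 0)) with h' | h'
        · refine absurd ?_ hp
          unfold pairOf
          rw [h, h']
          rfl
        · exact ⟨.sr 0, h'⟩
      · exact ⟨.r 1, h⟩

/-! ### the splitting condition -/

lemma mem_wprod_iff {Z : Type*} (X : Set Z) (w : Equiv.Perm Z) :
    w ∈ wprod X ↔ w '' X = X ∨ w '' X = Xᶜ := by
  constructor
  · rintro (⟨h, -⟩ | ⟨h, -⟩)
    · exact Or.inl h
    · exact Or.inr h
  · rintro (h | h)
    · exact Or.inl ⟨h, by rw [Equiv.image_compl, h]⟩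
    · exact Or.inr ⟨h, by rw [Equiv.image_compl, h, compl_compl]⟩

lemma toPermHom_coe {G : Type*} [Group G] (g : G) :
    ⇑(MulAction.toPermHom G G g) = (g * ·) := by
  funext x
  simp [MulAction.toPermHom_apply, MulAction.toPerm_apply]

lemma leftReg_le_iff {G : Type*} [Group G] (X : Set G) :
    leftRegRange G ≤ wprod X ↔ ∀ g : G, (g * ·) '' X = X ∨ (g * ·) '' X = Xᶜ := by
  constructor
  · intro h g
    have hg : MulAction.toPermHom G G g ∈ wprod X := h ⟨g, rfl⟩
    rw [mem_wprod_iff, toPermHom_coe] at hg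
    exact hg
  · rintro h w ⟨g, rfl⟩
    rw [mem_wprod_iff, toPermHom_coe]
    exact h g

/-- the predicate we are counting. -/
def P (n : ℕ) (X : Set (DihedralGroup n)) : Prop :=
  (1 : DihedralGroup n) ∈ X ∧ X.ncard = n ∧ leftRegRange (DihedralGroup n) ≤ wprod X

lemma card_Z2 : Nat.card Z2 = 2 := by
  rw [Nat.card_eq_fintype_card]
  rfl

lemma P_preimage [NeZero n] (f : DihedralGroup n →* Z2) (hf : Function.Surjective f) :
    P n (f ⁻¹' {1}) := by
  set X := f ⁻¹' {1} with hX
  have hmem : ∀ d, d ∈ X ↔ f d = 1 := fun d => Iff.rfl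
  refine ⟨by rw [hmem]; exact map_one f, ?_, ?_⟩
  · have hker : X = (f.ker : Set (DihedralGroup n)) := by
      ext d
      simp [hmem, MonoidHom.mem_ker]
    have hcard : Nat.card f.ker * f.ker.index = Nat.card (DihedralGroup n) :=
      Subgroup.card_mul_index f.ker
    have hind : f.ker.index = 2 := by
      rw [Subgroup.index_ker, MonoidHom.range_eq_top_of_surjective f hf]
      exact (Nat.card_congr Subgroup.topEquiv.toEquiv).trans card_Z2
    have hG : Nat.card (DihedralGroup n) = 2 * n := by
      rw [Nat.card_eq_fintype_card, DihedralGroup.card]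
    rw [hind, hG] at hcard
    have hc : X.ncard = Nat.card f.ker := by
      rw [← Nat.card_coe_set_eq, hker]
      rfl
    rw [hc]
    omega
  · rw [leftReg_le_iff]
    intro g
    have him : ∀ h, h ∈ (g * ·) '' X ↔ f (g⁻¹ * h) = 1 := by
      intro h
      constructor
      · rintro ⟨x, hx, rfl⟩
        rw [inv_mul_cancel_left]
        exact hx
      · intro hh
        exact ⟨g⁻¹ * h, hh, by simp⟩
    rcases z2_cases (f g) with hg | hg
    · left
      ext h
      rw [him, map_mul, map_inv, hg, inv_one, one_mul, hmem]
    · right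
      ext h
      rw [him, map_mul, map_inv, hg]
      have key : ∀ y : Z2, ((ofAdd 1)⁻¹ * y = 1 ↔ ¬ y = 1) := by decide
      rw [Set.mem_compl_iff, hmem]
      exact key (f h)

section eps
variable (X : Set (DihedralGroup n))

open scoped Classical in
/-- the hom associated to an invariant splitting. -/
noncomputable def epsHom (h1 : (1 : DihedralGroup n) ∈ X)
    (hle : ∀ g : DihedralGroup n, (g * ·) '' X = X ∨ (g * ·) '' X = Xᶜ) :
    DihedralGroup n →* Z2 where
  toFun g := if (g * ·) '' X = X then 1 else ofAdd 1
  map_one' := by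
    show (if ((1 : DihedralGroup n) * ·) '' X = X then (1 : Z2) else ofAdd 1) = 1
    rw [if_pos]
    have h : ((1 : DihedralGroup n) * ·) = id := by funext x; simp
    rw [h, Set.image_id]
  map_mul' := by
    have hne : X ≠ Xᶜ := by
      intro h
      have h2 : (1 : DihedralGroup n) ∈ Xᶜ := h ▸ h1
      exact h2 h1
    have hneq : ∀ g : DihedralGroup n, (g * ·) '' X = Xᶜ → ¬((g * ·) '' X = X) :=
      fun g hc hx => hne (hx.symm.trans hc)
    have hcompl : ∀ g : DihedralGroup n, (g * ·) '' Xᶜ = ((g * ·) '' X)ᶜ := fun g =>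
      Set.image_compl_eq (Group.mulLeft_bijective g)
    have hcomp : ∀ g h : DihedralGroup n, ((g * h) * ·) '' X = (g * ·) '' ((h * ·) '' X) := by
      intro g h
      rw [Set.image_image]
      exact Set.image_congr' (fun x => mul_assoc g h x)
    intro g h
    show (if ((g * h) * ·) '' X = X then (1 : Z2) else ofAdd 1) =
      (if (g * ·) '' X = X then (1 : Z2) else ofAdd 1) *
        (if (h * ·) '' X = X then (1 : Z2) else ofAdd 1)
    rcases hle h with hh | hh <;> rcases hle g with hg | hg
    · rw [if_pos hh, if_pos hg, if_pos (by rw [hcomp, hh, hg]), mul_one]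
    · rw [if_pos hh, if_neg (hneq g hg),
        if_neg (hneq _ (by rw [hcomp, hh, hg])), mul_one]
    · rw [if_neg (hneq h hh), if_pos hg,
        if_neg (hneq _ (by rw [hcomp, hh, hcompl, hg])), one_mul]
    · rw [if_neg (hneq h hh), if_neg (hneq g hg),
        if_pos (by rw [hcomp, hh, hcompl, hg, compl_compl])]
      decide

variable (h1 : (1 : DihedralGroup n) ∈ X)
  (hle : ∀ g : DihedralGroup n, (g * ·) '' X = X ∨ (g * ·) '' X = Xᶜ)

open scoped Classical in
lemma epsHom_apply (g : DihedralGroup n) :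
    epsHom X h1 hle g = if (g * ·) '' X = X then 1 else ofAdd 1 := rfl

lemma epsHom_preimage : (epsHom X h1 hle) ⁻¹' {1} = X := by
  classical
  ext g
  rw [Set.mem_preimage, Set.mem_singleton_iff, epsHom_apply]
  constructor
  · intro hg
    have himg : (g * ·) '' X = X := by
      by_contra hc
      rw [if_neg hc] at hg
      exact absurd hg (by decide)
    rw [← himg]
    exact ⟨1, h1, mul_one g⟩
  · intro hg
    rcases hle g with h | h
    · rw [if_pos h]
    · exfalso
      have : g ∈ Xᶜ := by
        rw [← h]
        exact ⟨1, h1, mul_one g⟩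
      exact this hg

lemma epsHom_surjective (hn : 3 ≤ n) [NeZero n] (hcard : X.ncard = n) :
    Function.Surjective (epsHom X h1 hle) := by
  classical
  have hex : ∃ g : DihedralGroup n, ¬((g * ·) '' X = X) := by
    by_contra hc
    push_neg at hc
    have huniv : X = Set.univ := by
      ext h
      refine ⟨fun _ => trivial, fun _ => ?_⟩
      rw [← hc h]
      exact ⟨1, h1, mul_one h⟩
    rw [huniv, Set.ncard_univ, Nat.card_eq_fintype_card, DihedralGroup.card] at hcard
    omega
  obtain ⟨g, hg⟩ := hex
  intro y
  rcases z2_cases y with rfl | rfl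
  · exact ⟨1, map_one _⟩
  · refine ⟨g, ?_⟩
    rw [epsHom_apply, if_neg hg]

end eps

lemma hom_eq_of_preimage {f g : DihedralGroup n →* Z2}
    (h : f ⁻¹' {1} = g ⁻¹' {1}) : f = g := by
  ext d
  have hmem : d ∈ f ⁻¹' {1} ↔ d ∈ g ⁻¹' {1} := by rw [h]
  simp only [Set.mem_preimage, Set.mem_singleton_iff] at hmem
  rcases z2_cases (f d) with h1 | h1 <;> rcases z2_cases (g d) with h2 | h2
  · rw [h1, h2]
  · exact absurd (hmem.mp h1) (by rw [h2]; decide)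
  · exact absurd (hmem.mpr h2) (by rw [h1]; decide)
  · rw [h1, h2]

/-! ### the bijection and the count -/

lemma card_eq_pairs (hn : 3 ≤ n) :
    Nat.card {X : Set (DihedralGroup n) // P n X} =
      Nat.card {p : ZMod 2 × ZMod 2 // n • p.1 = 0 ∧ p ≠ 0} := by
  haveI : NeZero n := ⟨by omega⟩
  refine Nat.card_eq_of_bijective
    (fun X => ⟨pairOf (epsHom X.1 X.2.1 ((leftReg_le_iff X.1).mp X.2.2.2)), ?_, ?_⟩) ⟨?_, ?_⟩
  · exact pairOf_smul _
  · rw [← surj_iff]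
    exact epsHom_surjective X.1 X.2.1 _ hn X.2.2.1
  · rintro ⟨X, hX⟩ ⟨Y, hY⟩ hXY
    have h := pairOf_inj (congrArg Subtype.val hXY)
    have hX' := epsHom_preimage X hX.1 ((leftReg_le_iff X).mp hX.2.2)
    have hY' := epsHom_preimage Y hY.1 ((leftReg_le_iff Y).mp hY.2.2)
    apply Subtype.ext
    show X = Y
    rw [← hX', ← hY']
    exact congrArg (fun f : DihedralGroup n →* Z2 => ⇑f ⁻¹' {1}) h
  · rintro ⟨p, hp1, hp2⟩
    have hsurj : Function.Surjective (mkHom p hp1) := by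
      rw [surj_iff, pairOf_mkHom]
      exact hp2
    have hP : P n ((mkHom p hp1) ⁻¹' {1}) := P_preimage _ hsurj
    refine ⟨⟨_, hP⟩, ?_⟩
    have heq : epsHom _ hP.1 ((leftReg_le_iff _).mp hP.2.2) = mkHom p hp1 :=
      hom_eq_of_preimage (by rw [epsHom_preimage])
    refine Subtype.ext ?_
    simp only [heq]
    exact pairOf_mkHom p hp1

lemma card_pairs (hn : 3 ≤ n) :
    Nat.card {p : ZMod 2 × ZMod 2 // n • p.1 = 0 ∧ p ≠ 0} = if Odd n then 1 else 3 := by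
  rcases Nat.even_or_odd n with he | ho
  · rw [if_neg (by simpa [Nat.not_odd_iff_even] using he)]
    have hz : (n : ZMod 2) = 0 := (ZMod.natCast_eq_zero_iff n 2).mpr he.two_dvd
    have hiff : ∀ p : ZMod 2 × ZMod 2, (n • p.1 = 0 ∧ p ≠ 0) ↔ p ≠ 0 := by
      intro p
      rw [nsmul_eq_mul, hz, zero_mul]
      tauto
    rw [Nat.card_congr (Equiv.subtypeEquivRight hiff), Nat.card_eq_fintype_card]
    decide
  · rw [if_pos ho]
    have hz : (n : ZMod 2) = 1 := by
      obtain ⟨k, hk⟩ := ho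
      subst hk
      push_cast
      have h2 : (2 : ZMod 2) = 0 := by decide
      rw [h2]
      ring
    have hiff : ∀ p : ZMod 2 × ZMod 2, (n • p.1 = 0 ∧ p ≠ 0) ↔ (p.1 = 0 ∧ p ≠ 0) := by
      intro p
      rw [nsmul_eq_mul, hz, one_mul]
    rw [Nat.card_congr (Equiv.subtypeEquivRight hiff), Nat.card_eq_fintype_card]
    decide

end CountSplittings

/-- `λ(D_n)` lies in `W(X, Xᶜ)` for exactly one splitting with `1 ∈ X` when `n` is odd,
and for exactly three such splittings when `n` is even. -/
theorem count_splittings_for_lambda (n : ℕ) (hn : 3 ≤ n) :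
    Nat.card {X : Set (DihedralGroup n) // (1 : DihedralGroup n) ∈ X ∧ X.ncard = n ∧
        leftRegRange (DihedralGroup n) ≤ wprod X} = if Odd n then 1 else 3 := by
  rw [show (fun X : Set (DihedralGroup n) => (1 : DihedralGroup n) ∈ X ∧ X.ncard = n ∧
        leftRegRange (DihedralGroup n) ≤ wprod X) = CountSplittings.P n from rfl]
  rw [CountSplittings.card_eq_pairs hn, CountSplittings.card_pairs hn]
end

section
/- Let n be an even positive integer and let v ∈ Υ_n (i.e., v is a unit modulo n with v² = 1), represented by its least nonnegative residue. If gcd(v + 1, n) = 2, then: (a) if 8 does not divide n, v = 1; (b) if 8 divides n, v = 1 or v = n/2 + 1. -/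
/-- For `n` even and `v ∈ Υ_n` with `gcd(v + 1, n) = 2`: if `8 ∤ n` then `v = 1`,
and if `8 ∣ n` then `v = 1` or `v = n/2 + 1`. -/
theorem upsilon_gcd_lemma (n : ℕ) (hpos : 0 < n) (heven : 2 ∣ n) (v : (ZMod n)ˣ)
    (hv : v ^ 2 = 1) (hgcd : Nat.gcd ((v : ZMod n).val + 1) n = 2) :
    (¬ 8 ∣ n → (v : ZMod n).val = 1) ∧
    (8 ∣ n → (v : ZMod n).val = 1 ∨ (v : ZMod n).val = n / 2 + 1) := by
  have hn2 : 2 ≤ n := Nat.le_of_dvd hpos heven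
  haveI : NeZero n := ⟨hpos.ne'⟩
  haveI : Fact (1 < n) := ⟨hn2⟩
  set w := (v : ZMod n).val with hwdef
  have h2w : 2 ∣ w + 1 := hgcd ▸ Nat.gcd_dvd_left _ _
  have hw1 : 1 ≤ w := by omega
  -- square relation
  have h1 : ((v : ZMod n)) ^ 2 = 1 := by
    rw [← Units.val_pow_eq_pow_val, hv, Units.val_one]
  have hsq : (w * w) % n = 1 := by
    have h2 := congrArg ZMod.val h1
    rwa [pow_two, ZMod.val_mul, ZMod.val_one] at h2
  have hdvd : n ∣ w * w - 1 := by
    have hmod : 1 ≡ w * w [MOD n] := by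
      unfold Nat.ModEq
      rw [hsq, Nat.mod_eq_of_lt hn2]
    exact (Nat.modEq_iff_dvd' (by nlinarith)).mp hmod
  obtain ⟨a, ha⟩ := h2w
  obtain ⟨k, hk⟩ := heven
  have hk1 : 1 ≤ k := by omega
  have hfact : w * w - 1 = (w + 1) * (w - 1) := by
    obtain ⟨m, hm⟩ : ∃ m, w = m + 1 := ⟨w - 1, by omega⟩
    rw [hm, Nat.add_sub_cancel, Nat.sub_eq_iff_eq_add (by nlinarith)]
    ring
  have hcop : Nat.Coprime a k := by
    have : Nat.gcd (2 * a) (2 * k) = 2 := by rw [← ha, ← hk]; exact hgcd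
    rw [Nat.gcd_mul_left] at this
    unfold Nat.Coprime
    omega
  have hkdvd : k ∣ a * (w - 1) := by
    have : 2 * k ∣ 2 * (a * (w - 1)) := by
      rw [← hk]
      calc n ∣ w * w - 1 := hdvd
        _ = 2 * (a * (w - 1)) := by rw [hfact, ha]; ring
    exact (Nat.mul_dvd_mul_iff_left (by norm_num : 0 < 2)).mp this
  have hkw : k ∣ w - 1 := (Nat.Coprime.symm hcop).dvd_of_dvd_mul_left hkdvd
  have hwlt : w < n := ZMod.val_lt _
  obtain ⟨c, hc⟩ := hkw
  have hc2 : c < 2 := by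
    by_contra hc2
    have h2k : 2 * k ≤ k * c := by nlinarith
    have : 2 * k ≤ w - 1 := hc ▸ h2k
    omega
  have hcases : w = 1 ∨ w = k + 1 := by interval_cases c <;> omega
  have hn2k : n / 2 = k := by omega
  constructor
  · intro h8
    rcases hcases with h | h
    · exact h
    · exfalso
      -- w = k + 1; w is odd so k is even, 8 ∤ n = 2k so 4 ∤ k, hence k ≡ 2 [4]
      have h4w : 4 ∣ w + 1 := by omega
      have h4n : 4 ∣ n := by omega
      have : (4 : ℕ) ∣ 2 := hgcd ▸ Nat.dvd_gcd h4w h4n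
      omega
  · intro _
    rcases hcases with h | h
    · exact Or.inl h
    · exact Or.inr (by omega)
end
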